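/- Fix a natural number q ≥ 0 and ρ with 0 < ρ < 1. As ε → 0⁺, the expression ((1-ρ)(1-(1-ε)ρ)(1-ερ)(3-2ρ)/(3-2ρ+(1-ε)ε ρ²)) · [ (6ε(1-ε)/(2-9ε(1-ε)))(2ρ/3)^q + ((1-ε)²/(ε(2-3(1-ε))))((1-ε)ρ)^q + (ε²/((1-ε)(2-3ε)))(ερ)^q + ((1+ε(1-ε))/(ε(1-ε)))ρ^q ] converges to (q+1)(1-ρ)² ρ^q. -/

import Mathlib

noncomputable def fhet (ρ ε : ℝ) (q : ℕ) : ℝ :=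
  ((1 - ρ) * (1 - (1 - ε)*ρ) * (1 - ε*ρ) * (3 - 2*ρ) / (3 - 2*ρ + (1 - ε)*ε*ρ^2)) *
    ( (6*ε*(1 - ε) / (2 - 9*ε*(1 - ε))) * (2*ρ/3)^q
    + ((1 - ε)^2 / (ε*(2 - 3*(1 - ε)))) * ((1 - ε)*ρ)^q
    + (ε^2 / ((1 - ε)*(2 - 3*ε))) * (ε*ρ)^q
    + ((1 + ε*(1 - ε)) / (ε*(1 - ε))) * ρ^q )

noncomputable def ghet (ρ : ℝ) (q : ℕ) (ε : ℝ) : ℝ :=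
  ((1 - ρ) * (1 - (1 - ε)*ρ) * (1 - ε*ρ) * (3 - 2*ρ) / (3 - 2*ρ + (1 - ε)*ε*ρ^2)) *
    ( (6*ε*(1 - ε) / (2 - 9*ε*(1 - ε))) * (2*ρ/3)^q
    + (ε^2 / ((1 - ε)*(2 - 3*ε))) * (ε*ρ)^q
    + ρ^q * ((-2 - 4*ε + 3*ε^2 + ∑ i ∈ Finset.range (q+3), (1-ε)^i) / ((1-ε)*(1-3*ε))) )

lemma key_eq (ρ : ℝ) (q : ℕ) (ε : ℝ) (hl : 0 < ε) (hr : ε < 1/4) (S : ℝ)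
    (hS : ε * S = 1 - (1-ε)^(q+3)) :
    (1-ε)^2/(ε*(2-3*(1-ε))) * ((1-ε)*ρ)^q + (1+ε*(1-ε))/(ε*(1-ε)) * ρ^q
      = ρ^q * ((-2-4*ε+3*ε^2 + S)/((1-ε)*(1-3*ε))) := by
  have he : ε ≠ 0 := ne_of_gt hl
  have h1e : (1:ℝ) - ε ≠ 0 := by nlinarith
  have h3e : (1:ℝ) - 3*ε ≠ 0 := by nlinarith
  have h31 : 2 - 3*((1:ℝ) - ε) ≠ 0 := by nlinarith
  have h3e' : (1:ℝ) - ε*3 ≠ 0 := by nlinarith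
  have h31' : 2 - ((1:ℝ) - ε)*3 ≠ 0 := by nlinarith
  rw [mul_pow]
  field_simp
  linear_combination (ρ^q*(1-3*ε)) * hS

lemma fhet_eq_ghet (ρ : ℝ) (q : ℕ) (ε : ℝ) (hε : ε ∈ Set.Ioo (0:ℝ) (1/4)) :
    fhet ρ ε q = ghet ρ q ε := by
  obtain ⟨hl, hr⟩ := hε
  have hS : ε * (∑ i ∈ Finset.range (q+3), (1-ε)^i) = 1 - (1-ε)^(q+3) := by
    linear_combination -(geom_sum_mul (1-ε) (q+3))
  have hk := key_eq ρ q ε hl hr _ hS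
  unfold fhet ghet
  congr 1
  linarith [hk]

theorem stmt_5 (q : ℕ) (ρ : ℝ) (h0 : 0 < ρ) (h1 : ρ < 1) :
    Filter.Tendsto (fun ε : ℝ => fhet ρ ε q) (nhdsWithin 0 (Set.Ioi 0))
      (nhds ((q + 1) * (1 - ρ)^2 * ρ^q)) := by
  have h32 : (3:ℝ) - 2*ρ ≠ 0 := by nlinarith
  have hcont : ContinuousAt (fun ε : ℝ => ghet ρ q ε) 0 := by
    unfold ghet
    apply ContinuousAt.mul
    · apply ContinuousAt.div
      · fun_prop
      · fun_prop
      · simpa using h32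
    · apply ContinuousAt.add
      apply ContinuousAt.add
      · apply ContinuousAt.mul _ continuousAt_const
        apply ContinuousAt.div
        · fun_prop
        · fun_prop
        · norm_num
      · apply ContinuousAt.mul
        · apply ContinuousAt.div
          · fun_prop
          · fun_prop
          · norm_num
        · fun_prop
      · apply ContinuousAt.mul continuousAt_const
        apply ContinuousAt.div
        · apply ContinuousAt.add (by fun_prop)
          exact (continuous_finset_sum _ (fun i _ => by continuity)).continuousAt
        · fun_prop
        · norm_num
  have hval : ghet ρ q 0 = (q + 1) * (1 - ρ)^2 * ρ^q := by
    unfold ghet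
    simp only [sub_zero, mul_zero, zero_mul, one_pow]
    rw [Finset.sum_const]
    simp only [Finset.card_range, smul_eq_mul, mul_one]
    rw [add_zero, mul_div_assoc, div_self h32, nsmul_eq_mul]
    field_simp
    push_cast
    ring
  have hT : Filter.Tendsto (fun ε : ℝ => ghet ρ q ε) (nhdsWithin 0 (Set.Ioi 0))
      (nhds ((q + 1) * (1 - ρ)^2 * ρ^q)) := by
    rw [← hval]
    exact (hcont.tendsto).mono_left nhdsWithin_le_nhds
  apply hT.congr'
  filter_upwards [Ioo_mem_nhdsGT_of_mem (by norm_num : (0:ℝ) ∈ Set.Ico 0 (1/4))] with ε hε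
  exact (fhet_eq_ghet ρ q ε hε).symm
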